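/- Let N, d₁, d₂ be positive integers, σ: ℝ → ℝ twice differentiable, x ∈ ℝ^N an input data vector, and y ∈ ℝ^N. For parameters Θ = (v, w, b) ∈ ℝ^{d₁} × ℝ^{d₁} × ℝ^{d₁}, define for each i the vector z_i = w_i·x + b_i·1_N ∈ ℝ^N, the network output t(Θ) = Σᵢ vᵢ·σ(z_i) (σ applied componentwise), the residual Δy = t(Θ) − y, and the loss E(Θ) = ‖y − t(Θ)‖₂². Suppose that for all 1 ≤ i ≤ d₁: ⟨Δy, σ(z_i)⟩ = 0, ⟨Δy, σ'(z_i)⟩ = 0, ⟨Δy, vᵢ·σ'(z_i)∘x⟩ = 0, ⟨Δy, vᵢ·σ''(z_i)∘x⟩ = 0, ⟨Δy, vᵢ·σ''(z_i)⟩ > 0, and ⟨Δy, vᵢ·σ''(z_i)∘x∘x⟩ > 0, where ∘ is the Hadamard (entrywise) product. Then Θ is a local minimum of E. -/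

import Mathlib

open Filter Topology Finset

set_option maxHeartbeats 1000000

lemma core_lemma (N : ℕ) (σ : ℝ → ℝ) (hσ : Differentiable ℝ σ)
    (hσ' : Differentiable ℝ (deriv σ))
    (x a : Fin N → ℝ) (w₀ b₀ : ℝ)
    (H2 : ∑ n, a n * deriv σ (w₀ * x n + b₀) = 0)
    (H3 : ∑ n, a n * deriv σ (w₀ * x n + b₀) * x n = 0)
    (H4 : ∑ n, a n * deriv (deriv σ) (w₀ * x n + b₀) * x n = 0)
    (H5 : 0 < ∑ n, a n * deriv (deriv σ) (w₀ * x n + b₀))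
    (H6 : 0 < ∑ n, a n * deriv (deriv σ) (w₀ * x n + b₀) * x n * x n) :
    ∃ δ > 0, ∀ u₁ u₂ : ℝ, |u₁| < δ → |u₂| < δ →
      ∑ n, a n * σ (w₀ * x n + b₀) ≤
      ∑ n, a n * σ ((w₀ + u₁) * x n + (b₀ + u₂)) := by
  set z : Fin N → ℝ := fun n => w₀ * x n + b₀ with hzdef
  set A : ℝ := ∑ n, a n * deriv (deriv σ) (z n) * x n * x n with hA
  set C : ℝ := ∑ n, a n * deriv (deriv σ) (z n) with hC
  have hApos : 0 < A := H6
  have hCpos : 0 < C := H5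
  set m : ℝ := min A C with hm
  have hmpos : 0 < m := lt_min hApos hCpos
  set M : ℝ := ∑ n, 2 * |a n| * (x n ^ 2 + 1) with hM
  have hMnonneg : 0 ≤ M := Finset.sum_nonneg fun n _ => by positivity
  set ε : ℝ := m / (2 * (M + 1)) with hε
  have hεpos : 0 < ε := by positivity
  -- uniform little-o estimate for deriv σ near the points z n
  have ho : ∀ᶠ h in 𝓝 (0:ℝ), ∀ n,
      |deriv σ (z n + h) - deriv σ (z n) - deriv (deriv σ) (z n) * h| ≤ ε * |h| := by
    rw [Filter.eventually_all]
    intro n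
    have hd : HasDerivAt (deriv σ) (deriv (deriv σ) (z n)) (z n) :=
      (hσ' (z n)).hasDerivAt
    rw [hasDerivAt_iff_isLittleO] at hd
    have hd2 := hd.def hεpos
    have ht : Tendsto (fun h : ℝ => z n + h) (𝓝 0) (𝓝 (z n)) := by
      have := (tendsto_const_nhds (x := z n) (f := 𝓝 (0:ℝ))).add tendsto_id
      simpa using this
    filter_upwards [ht.eventually hd2] with h hh
    simp only [Real.norm_eq_abs, add_sub_cancel_left, smul_eq_mul] at hh
    calc |deriv σ (z n + h) - deriv σ (z n) - deriv (deriv σ) (z n) * h|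
        = |deriv σ (z n + h) - deriv σ (z n) - h * deriv (deriv σ) (z n)| := by
          ring_nf
      _ ≤ ε * |h| := hh
  rw [Metric.eventually_nhds_iff] at ho
  obtain ⟨δ₀, hδ₀pos, hδ₀⟩ := ho
  have hδ₀' : ∀ h : ℝ, |h| < δ₀ → ∀ n,
      |deriv σ (z n + h) - deriv σ (z n) - deriv (deriv σ) (z n) * h| ≤ ε * |h| := by
    intro h hh
    exact hδ₀ (by simpa [Real.dist_eq] using hh)
  set S : ℝ := ∑ n, |x n| with hS
  have hSnonneg : 0 ≤ S := Finset.sum_nonneg fun n _ => abs_nonneg _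
  have hxS : ∀ n, |x n| ≤ S := fun n =>
    Finset.single_le_sum (fun i _ => abs_nonneg (x i)) (Finset.mem_univ n)
  refine ⟨δ₀ / (S + 2), by positivity, ?_⟩
  intro u₁ u₂ hu₁ hu₂
  set δ : ℝ := δ₀ / (S + 2) with hδ
  have hδpos : 0 < δ := by positivity
  set c : Fin N → ℝ := fun n => u₁ * x n + u₂ with hc
  have hcδ : ∀ n, |c n| < δ₀ := by
    intro n
    have h1 : |c n| ≤ |u₁| * |x n| + |u₂| := by
      calc |c n| ≤ |u₁ * x n| + |u₂| := abs_add_le _ _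
        _ = |u₁| * |x n| + |u₂| := by rw [abs_mul]
    have h2 : |u₁| * |x n| ≤ δ * S :=
      mul_le_mul hu₁.le (hxS n) (abs_nonneg _) hδpos.le
    have h3 : δ * (S + 2) = δ₀ := by
      rw [hδ]; field_simp
    nlinarith [abs_nonneg (c n)]
  set φ : ℝ → ℝ := fun t => ∑ n, a n * σ (z n + t * c n) with hφdef
  set φ' : ℝ → ℝ := fun t => ∑ n, a n * (deriv σ (z n + t * c n) * c n) with hφ'def
  have hφ : ∀ t : ℝ, HasDerivAt φ (φ' t) t := by
    intro t
    apply HasDerivAt.fun_sum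
    intro n _
    have hin : HasDerivAt (fun t : ℝ => z n + t * c n) (c n) t := by
      simpa using (hasDerivAt_mul_const (c n)).const_add (z n)
    have hcomp := ((hσ (z n + t * c n)).hasDerivAt.comp t hin)
    simpa [Function.comp] using hcomp.const_mul (a n)
  have hmvt := exists_hasDerivAt_eq_slope φ φ' (by norm_num : (0:ℝ) < 1)
    (fun t _ => (hφ t).continuousAt.continuousWithinAt) (fun t _ => hφ t)
  obtain ⟨θ, hθmem, hslope⟩ := hmvt
  have hθ0 : 0 < θ := hθmem.1
  have hθ1 : θ < 1 := hθmem.2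
  have hφ0 : φ 0 = ∑ n, a n * σ (w₀ * x n + b₀) := by
    simp [hφdef, hzdef]
  have hφ1 : φ 1 = ∑ n, a n * σ ((w₀ + u₁) * x n + (b₀ + u₂)) := by
    apply Finset.sum_congr rfl
    intro n _
    simp only [hφdef, hzdef, hc]
    ring_nf
  -- remainder terms
  set r : Fin N → ℝ := fun n =>
    deriv σ (z n + θ * c n) - deriv σ (z n) - deriv (deriv σ) (z n) * (θ * c n) with hr
  have hrle : ∀ n, |r n| ≤ ε * (θ * |c n|) := by
    intro n
    have h1 : |θ * c n| < δ₀ := by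
      rw [abs_mul, abs_of_pos hθ0]
      calc θ * |c n| ≤ 1 * |c n| :=
        mul_le_mul_of_nonneg_right hθ1.le (abs_nonneg _)
        _ = |c n| := one_mul _
        _ < δ₀ := hcδ n
    have := hδ₀' (θ * c n) h1 n
    calc |r n| ≤ ε * |θ * c n| := this
      _ = ε * (θ * |c n|) := by rw [abs_mul, abs_of_pos hθ0]
  -- decompose φ' θ
  have hsplit : φ' θ =
      u₁ * (∑ n, a n * deriv σ (z n) * x n) + u₂ * (∑ n, a n * deriv σ (z n))
      + θ * (∑ n, a n * deriv (deriv σ) (z n) * (c n)^2)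
      + ∑ n, a n * c n * r n := by
    simp only [hφ'def, Finset.mul_sum, ← Finset.sum_add_distrib]
    apply Finset.sum_congr rfl
    intro n _
    simp only [hr, hc]
    ring
  have e2 : ∑ n, a n * deriv (deriv σ) (z n) * (c n)^2
      = u₁^2 * A + 2*u₁*u₂*(∑ n, a n * deriv (deriv σ) (z n) * x n) + u₂^2 * C := by
    rw [hA, hC, Finset.mul_sum, Finset.mul_sum, Finset.mul_sum,
      ← Finset.sum_add_distrib, ← Finset.sum_add_distrib]
    apply Finset.sum_congr rfl
    intro n _
    simp only [hc]
    ring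
  have e3 : |∑ n, a n * c n * r n| ≤ ε * θ * ((u₁^2 + u₂^2) * M) := by
    calc |∑ n, a n * c n * r n| ≤ ∑ n, |a n * c n * r n| :=
        Finset.abs_sum_le_sum_abs _ _
      _ ≤ ∑ n, ε * θ * ((u₁^2 + u₂^2) * (2 * |a n| * (x n ^ 2 + 1))) := by
        apply Finset.sum_le_sum
        intro n _
        have h1 : |a n * c n * r n| = |a n| * |c n| * |r n| := by
          rw [abs_mul, abs_mul]
        have h2 := hrle n
        have h3 : (c n)^2 ≤ 2 * (u₁^2 + u₂^2) * (x n ^2 + 1) := by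
          simp only [hc]
          nlinarith [sq_nonneg (u₁ * x n - u₂), sq_nonneg (u₁ * x n + u₂),
            sq_nonneg u₁, sq_nonneg u₂, sq_nonneg (x n)]
        have h4 : |c n|^2 = (c n)^2 := sq_abs _
        rw [h1]
        calc |a n| * |c n| * |r n| ≤ |a n| * |c n| * (ε * (θ * |c n|)) :=
            mul_le_mul_of_nonneg_left h2 (by positivity)
          _ = ε * θ * (|a n| * (c n)^2) := by rw [← h4]; ring
          _ ≤ ε * θ * (|a n| * (2 * (u₁^2 + u₂^2) * (x n ^2 + 1))) := by
            apply mul_le_mul_of_nonneg_left _ (by positivity)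
            exact mul_le_mul_of_nonneg_left h3 (abs_nonneg _)
          _ = ε * θ * ((u₁^2 + u₂^2) * (2 * |a n| * (x n ^ 2 + 1))) := by ring
      _ = ε * θ * ((u₁^2 + u₂^2) * M) := by
        rw [hM, Finset.mul_sum, Finset.mul_sum]
  -- final bound
  have herr : -(ε * θ * ((u₁^2 + u₂^2) * M)) ≤ ∑ n, a n * c n * r n :=
    neg_le_of_abs_le e3 |>.trans_eq rfl
  have hmA : m ≤ A := min_le_left _ _
  have hmC : m ≤ C := min_le_right _ _
  have hεM : ε * M ≤ m / 2 := by
    rw [hε, div_mul_eq_mul_div, div_le_div_iff₀ (by positivity) (by norm_num : (0:ℝ) < 2)]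
    nlinarith
  have H2' : ∑ n, a n * deriv σ (z n) = 0 := H2
  have H3' : ∑ n, a n * deriv σ (z n) * x n = 0 := H3
  have H4' : ∑ n, a n * deriv (deriv σ) (z n) * x n = 0 := H4
  have hφ'θ : 0 ≤ φ' θ := by
    rw [hsplit, H2', H3', e2, H4']
    have hq : (0:ℝ) ≤ u₁^2 + u₂^2 := by positivity
    have k1 : θ * (m * (u₁^2 + u₂^2)) ≤ θ * (u₁^2 * A + 2*u₁*u₂*0 + u₂^2 * C) := by
      apply mul_le_mul_of_nonneg_left _ hθ0.le
      nlinarith [sq_nonneg u₁, sq_nonneg u₂]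
    have k2 : ε * θ * ((u₁^2 + u₂^2) * M) ≤ θ * ((u₁^2 + u₂^2) * (m/2)) := by
      calc ε * θ * ((u₁^2 + u₂^2) * M) = (θ * (u₁^2 + u₂^2)) * (ε * M) := by ring
        _ ≤ (θ * (u₁^2 + u₂^2)) * (m/2) :=
          mul_le_mul_of_nonneg_left hεM (mul_nonneg hθ0.le hq)
        _ = θ * ((u₁^2 + u₂^2) * (m/2)) := by ring
    have k3 : θ * (m * (u₁^2 + u₂^2)) - θ * ((u₁^2 + u₂^2) * (m/2))
        = (θ * (u₁^2 + u₂^2) * m) / 2 := by ring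
    have k4 : 0 ≤ θ * (u₁^2 + u₂^2) * m :=
      mul_nonneg (mul_nonneg hθ0.le hq) hmpos.le
    linarith [herr]
  have : φ 1 - φ 0 = φ' θ := by
    rw [hslope]; ring
  rw [← hφ0, ← hφ1]
  linarith [hφ'θ, this]

lemma dist_fst_le' {α β : Type*} [PseudoMetricSpace α] [PseudoMetricSpace β]
    (p q : α × β) : dist p.1 q.1 ≤ dist p q := by
  rw [Prod.dist_eq]; exact le_max_left _ _

lemma dist_snd_le' {α β : Type*} [PseudoMetricSpace α] [PseudoMetricSpace β]
    (p q : α × β) : dist p.2 q.2 ≤ dist p q := by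
  rw [Prod.dist_eq]; exact le_max_right _ _

/-- Sufficient condition (an equation/inequality system) for a weight
configuration of a 1-hidden-layer network to be a local minimum of the
quadratic empirical loss. -/
theorem local_min_of_system (N d₁ d₂ : ℕ) (hN : 0 < N) (hd₁ : 0 < d₁)
    (hd₂ : 0 < d₂)
    (σ : ℝ → ℝ) (hσ : Differentiable ℝ σ) (hσ' : Differentiable ℝ (deriv σ))
    (x y : Fin N → ℝ) (v w b : Fin d₁ → ℝ)
    (Δy : Fin N → ℝ)
    (hΔ : Δy = fun n => (∑ j, v j * σ (w j * x n + b j)) - y n)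
    (h1 : ∀ i, ∑ n, Δy n * σ (w i * x n + b i) = 0)
    (h2 : ∀ i, ∑ n, Δy n * deriv σ (w i * x n + b i) = 0)
    (h3 : ∀ i, ∑ n, Δy n * (v i * deriv σ (w i * x n + b i) * x n) = 0)
    (h4 : ∀ i, ∑ n, Δy n * (v i * deriv (deriv σ) (w i * x n + b i) * x n) = 0)
    (h5 : ∀ i, 0 < ∑ n, Δy n * (v i * deriv (deriv σ) (w i * x n + b i)))
    (h6 : ∀ i, 0 < ∑ n,
      Δy n * (v i * deriv (deriv σ) (w i * x n + b i) * x n * x n)) :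
    IsLocalMin (fun Θ : (Fin d₁ → ℝ) × (Fin d₁ → ℝ) × (Fin d₁ → ℝ) =>
      ∑ n, (y n - ∑ i, Θ.1 i * σ (Θ.2.1 i * x n + Θ.2.2 i)) ^ 2)
      (v, w, b) := by
  -- v i ≠ 0
  have hv : ∀ i, v i ≠ 0 := by
    intro i hvi
    have := h5 i
    simp [hvi] at this
  -- factored versions of the hypotheses
  have f3 : ∀ i, ∑ n, Δy n * deriv σ (w i * x n + b i) * x n = 0 := by
    intro i
    have h := h3 i
    rw [show (∑ n, Δy n * (v i * deriv σ (w i * x n + b i) * x n))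
        = v i * ∑ n, Δy n * deriv σ (w i * x n + b i) * x n by
      rw [Finset.mul_sum]; exact Finset.sum_congr rfl fun n _ => by ring] at h
    exact (mul_eq_zero.1 h).resolve_left (hv i)
  have f4 : ∀ i, ∑ n, Δy n * deriv (deriv σ) (w i * x n + b i) * x n = 0 := by
    intro i
    have h := h4 i
    rw [show (∑ n, Δy n * (v i * deriv (deriv σ) (w i * x n + b i) * x n))
        = v i * ∑ n, Δy n * deriv (deriv σ) (w i * x n + b i) * x n by
      rw [Finset.mul_sum]; exact Finset.sum_congr rfl fun n _ => by ring] at h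
    exact (mul_eq_zero.1 h).resolve_left (hv i)
  have f5 : ∀ i, 0 < v i * ∑ n, Δy n * deriv (deriv σ) (w i * x n + b i) := by
    intro i
    have h := h5 i
    rw [show (∑ n, Δy n * (v i * deriv (deriv σ) (w i * x n + b i)))
        = v i * ∑ n, Δy n * deriv (deriv σ) (w i * x n + b i) by
      rw [Finset.mul_sum]; exact Finset.sum_congr rfl fun n _ => by ring] at h
    exact h
  have f6 : ∀ i, 0 < v i * ∑ n, Δy n * deriv (deriv σ) (w i * x n + b i) * x n * x n := by
    intro i
    have h := h6 i
    rw [show (∑ n, Δy n * (v i * deriv (deriv σ) (w i * x n + b i) * x n * x n))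
        = v i * ∑ n, Δy n * deriv (deriv σ) (w i * x n + b i) * x n * x n by
      rw [Finset.mul_sum]; exact Finset.sum_congr rfl fun n _ => by ring] at h
    exact h
  -- per-neuron local sign condition
  have key : ∀ i, ∀ᶠ p : ℝ × ℝ × ℝ in 𝓝 (v i, w i, b i),
      0 ≤ p.1 * ∑ n, Δy n * σ (p.2.1 * x n + p.2.2) := by
    intro i
    rcases lt_or_gt_of_ne (hv i) with hneg | hpos
    · -- v i < 0 : use a := -Δy
      have H2 : ∑ n, (-Δy n) * deriv σ (w i * x n + b i) = 0 := by
        rw [show (∑ n, (-Δy n) * deriv σ (w i * x n + b i))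
            = -∑ n, Δy n * deriv σ (w i * x n + b i) by
          rw [← Finset.sum_neg_distrib]; exact Finset.sum_congr rfl fun n _ => by ring]
        rw [h2 i]; ring
      have H3 : ∑ n, (-Δy n) * deriv σ (w i * x n + b i) * x n = 0 := by
        rw [show (∑ n, (-Δy n) * deriv σ (w i * x n + b i) * x n)
            = -∑ n, Δy n * deriv σ (w i * x n + b i) * x n by
          rw [← Finset.sum_neg_distrib]; exact Finset.sum_congr rfl fun n _ => by ring]
        rw [f3 i]; ring
      have H4 : ∑ n, (-Δy n) * deriv (deriv σ) (w i * x n + b i) * x n = 0 := by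
        rw [show (∑ n, (-Δy n) * deriv (deriv σ) (w i * x n + b i) * x n)
            = -∑ n, Δy n * deriv (deriv σ) (w i * x n + b i) * x n by
          rw [← Finset.sum_neg_distrib]; exact Finset.sum_congr rfl fun n _ => by ring]
        rw [f4 i]; ring
      have H5 : 0 < ∑ n, (-Δy n) * deriv (deriv σ) (w i * x n + b i) := by
        rw [show (∑ n, (-Δy n) * deriv (deriv σ) (w i * x n + b i))
            = -∑ n, Δy n * deriv (deriv σ) (w i * x n + b i) by
          rw [← Finset.sum_neg_distrib]; exact Finset.sum_congr rfl fun n _ => by ring]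
        nlinarith [f5 i]
      have H6 : 0 < ∑ n, (-Δy n) * deriv (deriv σ) (w i * x n + b i) * x n * x n := by
        rw [show (∑ n, (-Δy n) * deriv (deriv σ) (w i * x n + b i) * x n * x n)
            = -∑ n, Δy n * deriv (deriv σ) (w i * x n + b i) * x n * x n by
          rw [← Finset.sum_neg_distrib]; exact Finset.sum_congr rfl fun n _ => by ring]
        nlinarith [f6 i]
      obtain ⟨δ, hδpos, hδ⟩ := core_lemma N σ hσ hσ' x (fun n => -Δy n) (w i) (b i)
        H2 H3 H4 H5 H6
      rw [Metric.eventually_nhds_iff]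
      refine ⟨min δ (-(v i)), lt_min hδpos (by linarith), ?_⟩
      intro p hp
      have hp1 : |p.1 - v i| < -(v i) := by
        have := (dist_fst_le' p (v i, w i, b i)).trans_lt hp
        rw [Real.dist_eq] at this
        exact this.trans_le (min_le_right _ _)
      have hp1' : p.1 ≤ 0 := by
        rcases abs_lt.1 hp1 with ⟨hl, hr⟩; linarith
      have hpw : |p.2.1 - w i| < δ := by
        have h' := ((dist_fst_le' p.2 (w i, b i)).trans
          (dist_snd_le' p (v i, w i, b i))).trans_lt hp
        rw [Real.dist_eq] at h'
        exact h'.trans_le (min_le_left _ _)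
      have hpb : |p.2.2 - b i| < δ := by
        have h' := ((dist_snd_le' p.2 (w i, b i)).trans
          (dist_snd_le' p (v i, w i, b i))).trans_lt hp
        rw [Real.dist_eq] at h'
        exact h'.trans_le (min_le_left _ _)
      have hG := hδ (p.2.1 - w i) (p.2.2 - b i) hpw hpb
      have hz0 : ∑ n, (-Δy n) * σ (w i * x n + b i) = 0 := by
        rw [show (∑ n, (-Δy n) * σ (w i * x n + b i))
            = -∑ n, Δy n * σ (w i * x n + b i) by
          rw [← Finset.sum_neg_distrib]; exact Finset.sum_congr rfl fun n _ => by ring]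
        rw [h1 i]; ring
      rw [hz0] at hG
      have hG' : ∑ n, Δy n * σ (p.2.1 * x n + p.2.2) ≤ 0 := by
        have : ∑ n, (-Δy n) * σ ((w i + (p.2.1 - w i)) * x n + (b i + (p.2.2 - b i)))
            = -∑ n, Δy n * σ (p.2.1 * x n + p.2.2) := by
          rw [← Finset.sum_neg_distrib]
          apply Finset.sum_congr rfl
          intro n _
          ring_nf
        rw [this] at hG
        linarith
      nlinarith [hp1', hG']
    · -- v i > 0 : use a := Δy
      have H5 : 0 < ∑ n, Δy n * deriv (deriv σ) (w i * x n + b i) := by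
        nlinarith [f5 i]
      have H6 : 0 < ∑ n, Δy n * deriv (deriv σ) (w i * x n + b i) * x n * x n := by
        nlinarith [f6 i]
      obtain ⟨δ, hδpos, hδ⟩ := core_lemma N σ hσ hσ' x Δy (w i) (b i)
        (h2 i) (f3 i) (f4 i) H5 H6
      rw [Metric.eventually_nhds_iff]
      refine ⟨min δ (v i), lt_min hδpos hpos, ?_⟩
      intro p hp
      have hp1 : |p.1 - v i| < v i := by
        have := (dist_fst_le' p (v i, w i, b i)).trans_lt hp
        rw [Real.dist_eq] at this
        exact this.trans_le (min_le_right _ _)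
      have hp1' : 0 ≤ p.1 := by
        rcases abs_lt.1 hp1 with ⟨hl, hr⟩; linarith
      have hpw : |p.2.1 - w i| < δ := by
        have h' := ((dist_fst_le' p.2 (w i, b i)).trans
          (dist_snd_le' p (v i, w i, b i))).trans_lt hp
        rw [Real.dist_eq] at h'
        exact h'.trans_le (min_le_left _ _)
      have hpb : |p.2.2 - b i| < δ := by
        have h' := ((dist_snd_le' p.2 (w i, b i)).trans
          (dist_snd_le' p (v i, w i, b i))).trans_lt hp
        rw [Real.dist_eq] at h'
        exact h'.trans_le (min_le_left _ _)
      have hG := hδ (p.2.1 - w i) (p.2.2 - b i) hpw hpb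
      rw [h1 i] at hG
      have hG' : 0 ≤ ∑ n, Δy n * σ (p.2.1 * x n + p.2.2) := by
        have : ∑ n, Δy n * σ ((w i + (p.2.1 - w i)) * x n + (b i + (p.2.2 - b i)))
            = ∑ n, Δy n * σ (p.2.1 * x n + p.2.2) := by
          apply Finset.sum_congr rfl
          intro n _
          ring_nf
        rw [this] at hG
        linarith
      exact mul_nonneg hp1' hG'
  -- assemble the eventual statement over all neurons
  have keyall : ∀ᶠ Θ' : (Fin d₁ → ℝ) × (Fin d₁ → ℝ) × (Fin d₁ → ℝ) in 𝓝 (v, w, b),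
      ∀ i, 0 ≤ Θ'.1 i * ∑ n, Δy n * σ (Θ'.2.1 i * x n + Θ'.2.2 i) := by
    rw [Filter.eventually_all]
    intro i
    have hcont : Continuous fun Θ' : (Fin d₁ → ℝ) × (Fin d₁ → ℝ) × (Fin d₁ → ℝ) =>
        ((Θ'.1 i, Θ'.2.1 i, Θ'.2.2 i) : ℝ × ℝ × ℝ) := by
      refine ((continuous_apply i).comp continuous_fst).prodMk
        (((continuous_apply i).comp (continuous_fst.comp continuous_snd)).prodMk
          ((continuous_apply i).comp (continuous_snd.comp continuous_snd)))
    exact (hcont.tendsto (v, w, b)).eventually (key i)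
  -- conclude
  apply keyall.mono
  intro Θ' hΘ'
  -- notation
  set T : Fin N → ℝ := fun n => ∑ i, v i * σ (w i * x n + b i) with hT
  set T' : Fin N → ℝ := fun n => ∑ i, Θ'.1 i * σ (Θ'.2.1 i * x n + Θ'.2.2 i) with hT'
  have hΔ' : ∀ n, Δy n = T n - y n := fun n => by rw [hΔ]
  have expand : ∑ n, (y n - T' n)^2
      = ∑ n, ((y n - T n)^2 + (2 * (Δy n * (T' n - T n)) + (T' n - T n)^2)) := by
    apply Finset.sum_congr rfl
    intro n _
    rw [hΔ' n]
    ring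
  have swap : ∀ (vv ww bb : Fin d₁ → ℝ),
      ∑ n, Δy n * (∑ i, vv i * σ (ww i * x n + bb i))
      = ∑ i, vv i * ∑ n, Δy n * σ (ww i * x n + bb i) := by
    intro vv ww bb
    simp_rw [Finset.mul_sum]
    rw [Finset.sum_comm]
    apply Finset.sum_congr rfl
    intro i _
    apply Finset.sum_congr rfl
    intro n _
    ring
  have hcross : ∑ n, Δy n * (T' n - T n)
      = (∑ i, Θ'.1 i * ∑ n, Δy n * σ (Θ'.2.1 i * x n + Θ'.2.2 i))
        - ∑ i, v i * ∑ n, Δy n * σ (w i * x n + b i) := by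
    rw [show (∑ n, Δy n * (T' n - T n)) = (∑ n, Δy n * T' n) - ∑ n, Δy n * T n by
      rw [← Finset.sum_sub_distrib]; exact Finset.sum_congr rfl fun n _ => by ring]
    rw [hT, hT']
    rw [swap Θ'.1 Θ'.2.1 Θ'.2.2, swap v w b]
  have hzero : ∑ i, v i * ∑ n, Δy n * σ (w i * x n + b i) = 0 := by
    apply Finset.sum_eq_zero
    intro i _
    rw [h1 i]; ring
  have hpos1 : 0 ≤ ∑ n, Δy n * (T' n - T n) := by
    rw [hcross, hzero, sub_zero]
    exact Finset.sum_nonneg fun i _ => hΘ' i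
  have hpos2 : 0 ≤ ∑ n, (T' n - T n)^2 :=
    Finset.sum_nonneg fun n _ => sq_nonneg _
  show ∑ n, (y n - T n)^2 ≤ ∑ n, (y n - T' n)^2
  rw [expand, Finset.sum_add_distrib, Finset.sum_add_distrib, ← Finset.mul_sum]
  linarith
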